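/- Let C be a category with a proper factorisation system in which there is at most one M-morphism (embedding) between any two paths, and such that the full subcategory of paths is locally finite. If f : P → Q and g : Q → P are quotients (Q-morphisms) between paths, then f and g are mutually inverse isomorphisms. -/

import Mathlib

open CategoryTheory

universe v u

variable {C : Type u} [Category.{v} C]

/-- `(Q, M)` is a weak factorisation system: every morphism factors as an `M`-morphism
after a `Q`-morphism, and the two classes are determined by mutual lifting properties. -/
def IsWFS (Q M : MorphismProperty C) : Prop :=
  (∀ {X Y : C} (f : X ⟶ Y), ∃ (Z : C) (e : X ⟶ Z) (m : Z ⟶ Y), Q e ∧ M m ∧ e ≫ m = f) ∧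
  (∀ {X Y : C} (e : X ⟶ Y), Q e ↔ ∀ {A B : C} (m : A ⟶ B), M m → HasLiftingProperty e m) ∧
  (∀ {X Y : C} (m : X ⟶ Y), M m ↔ ∀ {A B : C} (e : A ⟶ B), Q e → HasLiftingProperty e m)

/-- A proper weak factorisation system: additionally quotients are epic and
embeddings are monic. -/
def IsProperWFS (Q M : MorphismProperty C) : Prop :=
  IsWFS Q M ∧ (∀ {X Y : C} (f : X ⟶ Y), Q f → Epi f) ∧
    (∀ {X Y : C} (f : X ⟶ Y), M f → Mono f)

/-- The factorisation preorder on `M`-subobjects of `X`: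
`p ≤ q` iff `p` factors through `q`. -/
def MSubLe (M : MorphismProperty C) {X : C}
    (p q : Σ S : C, {m : S ⟶ X // M m}) : Prop :=
  ∃ i : p.1 ⟶ q.1, i ≫ q.2.1 = p.2.1

/-- `X` is a path: the poset of `M`-subobjects of `X` (the antisymmetrisation of the
factorisation preorder) is a finite chain. -/
def IsPath (M : MorphismProperty C) (X : C) : Prop :=
  (∀ p q : Σ S : C, {m : S ⟶ X // M m}, MSubLe M p q ∨ MSubLe M q p) ∧
  Finite (Quot (fun p q : Σ S : C, {m : S ⟶ X // M m} => MSubLe M p q ∧ MSubLe M q p))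

/-- A quotient endomorphism of a path is the identity. -/
lemma quotient_endo_of_path_eq_id
    (Q M : MorphismProperty C) (h : IsProperWFS Q M)
    (huniq : ∀ {P₁ P₂ : C}, IsPath M P₁ → IsPath M P₂ →
      ∀ (m n : P₁ ⟶ P₂), M m → M n → m = n)
    (hlf : ∀ {P₁ P₂ : C}, IsPath M P₁ → IsPath M P₂ → Finite (P₁ ⟶ P₂))
    {P : C} (hP : IsPath M P) (e : P ⟶ P) (he : Q e) : e = 𝟙 P := by
  obtain ⟨⟨hfac, hQiff, hMiff⟩, hepi, hmono⟩ := h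
  haveI : Finite (P ⟶ P) := hlf hP hP
  haveI : Epi e := hepi e he
  -- powers of e
  let pow : ℕ → (P ⟶ P) := fun n => Nat.rec (𝟙 P) (fun _ p => p ≫ e) n
  have hsucc : ∀ n, pow (n + 1) = pow n ≫ e := fun n => rfl
  have hcomm : ∀ n, pow n ≫ e = e ≫ pow n := by
    intro n
    induction n with
    | zero => simp [pow]
    | succ k ih =>
      calc pow (k + 1) ≫ e = (pow k ≫ e) ≫ e := by rw [hsucc]
        _ = (e ≫ pow k) ≫ e := by rw [ih]
        _ = e ≫ pow k ≫ e := Category.assoc _ _ _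
        _ = e ≫ pow (k + 1) := by rw [hsucc]

  have hEpi : ∀ n, Epi (pow n) := by
    intro n
    induction n with
    | zero => exact inferInstanceAs (Epi (𝟙 P))
    | succ k ih => rw [hsucc]; exact @epi_comp _ _ _ _ _ _ ih _ ‹Epi e›
  have hadd : ∀ a k, pow (a + k) = pow a ≫ pow k := by
    intro a k
    induction k with
    | zero => simp [pow]
    | succ j ih =>
      rw [show a + (j + 1) = (a + j) + 1 from rfl, hsucc, ih, hsucc, Category.assoc]
  obtain ⟨a, b, hab, heq⟩ := Finite.exists_ne_map_eq_of_infinite pow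
  wlog hlt : a < b generalizing a b
  · exact this b a hab.symm heq.symm (by omega)
  have hid : 𝟙 P = pow (b - a) := by
    have h1 : pow a ≫ 𝟙 P = pow a ≫ pow (b - a) := by
      rw [Category.comp_id, ← hadd, Nat.add_sub_cancel' hlt.le, heq]
    exact (hEpi a).left_cancellation _ _ h1
  obtain ⟨k, hk⟩ : ∃ k, b - a = k + 1 := ⟨b - a - 1, by omega⟩
  rw [hk, hsucc] at hid
  have hid' : e ≫ pow k = 𝟙 P := by rw [← hcomm, ← hid]
  haveI : IsIso e := ⟨pow k, hid', hid.symm⟩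
  have hMe : M e := (hMiff e).mpr
    (fun e' _ => HasLiftingProperty.of_right_iso e e')
  have hMid : M (𝟙 P) := (hMiff (𝟙 P)).mpr
    (fun e' _ => HasLiftingProperty.of_right_iso (𝟙 P) e')
  exact huniq hP hP e (𝟙 P) hMe hMid

/-- In a category with a proper factorisation system such that there is at most one
embedding between any two paths and the full subcategory of paths is locally finite,
any two quotients `f : P → Q` and `g : Q → P` between paths are mutually inverse
isomorphisms. -/
theorem quotients_between_paths_are_inverse
    (Q M : MorphismProperty C) (h : IsProperWFS Q M)
    (huniq : ∀ {P₁ P₂ : C}, IsPath M P₁ → IsPath M P₂ →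
      ∀ (m n : P₁ ⟶ P₂), M m → M n → m = n)
    (hlf : ∀ {P₁ P₂ : C}, IsPath M P₁ → IsPath M P₂ → Finite (P₁ ⟶ P₂))
    {P₁ P₂ : C} (hP₁ : IsPath M P₁) (hP₂ : IsPath M P₂)
    (f : P₁ ⟶ P₂) (g : P₂ ⟶ P₁) (hf : Q f) (hg : Q g) :
    f ≫ g = 𝟙 P₁ ∧ g ≫ f = 𝟙 P₂ := by
  obtain ⟨⟨hfac, hQiff, hMiff⟩, hepi, hmono⟩ := id h
  have hcomp : ∀ {A B D : C} (u : A ⟶ B) (v : B ⟶ D), Q u → Q v → Q (u ≫ v) := by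
    intro A B D u v hu hv
    rw [hQiff]
    intro X Y m hm
    haveI := (hQiff u).mp hu m hm
    haveI := (hQiff v).mp hv m hm
    infer_instance
  constructor
  · exact quotient_endo_of_path_eq_id Q M h huniq hlf hP₁ (f ≫ g) (hcomp f g hf hg)
  · exact quotient_endo_of_path_eq_id Q M h huniq hlf hP₂ (g ≫ f) (hcomp g f hg hf)
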